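/- Let E_min : (0,∞) → ℝ be defined by E_min(ρ) = inf{E(v) : v ∈ H¹(ℝ^d), ‖v‖_{L²}² = ρ}, with E(u) = (1/2)‖∇u‖² − (1/2)‖u‖_{L⁴}⁴ + (1/3)‖u‖_{L⁶}⁶. Then E_min(ρ) ≥ −(3/16)ρ for every ρ > 0. -/

import Mathlib

open MeasureTheory

/-- The cubic-quintic energy of an `H¹` function on `ℝ^d`. -/
noncomputable def cqEnergy (d : ℕ) (u : (Fin d → ℝ) → ℂ) : ℝ :=
  (1/2) * (eLpNorm (fun x => fderiv ℝ u x) 2 volume).toReal ^ 2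
  - (1/2) * (eLpNorm u 4 volume).toReal ^ 4
  + (1/3) * (eLpNorm u 6 volume).toReal ^ 6

lemma interp_446 {α : Type*} {m : MeasurableSpace α} {μ : Measure α} (v : α → ℂ)
    (hm : AEStronglyMeasurable v μ) :
    eLpNorm v 4 μ ^ (4:ℝ) ≤ eLpNorm v 2 μ * eLpNorm v 6 μ ^ (3:ℝ) := by
  have hcast : (fun x => ‖v x‖ ^ (3:ℝ)) = fun x => ‖v x‖ ^ (3:ℕ) := by
    funext x; rw [show (3:ℝ) = ((3:ℕ):ℝ) by norm_num, Real.rpow_natCast]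
  have hg : AEStronglyMeasurable (fun x => ‖v x‖ ^ (3:ℝ)) μ := by
    rw [hcast]; exact hm.norm.pow 3
  have hH := eLpNorm_le_eLpNorm_mul_eLpNorm'_of_norm (μ := μ)
      (f := fun x => ‖v x‖) (g := fun x => ‖v x‖ ^ (3:ℝ)) (p := 2) (q := 2) (r := 1)
      hm.norm hg (· * ·) 1
      (Filter.Eventually.of_forall fun x => by
        simp [Real.norm_eq_abs, abs_mul, abs_of_nonneg (Real.rpow_nonneg (norm_nonneg _) _),
          abs_of_nonneg (norm_nonneg (v x))])
      (hpqr := ⟨by rw [inv_one, ENNReal.inv_two_add_inv_two]⟩)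
  have hfun : (fun x => ‖v x‖ * ‖v x‖ ^ (3:ℝ)) = fun x => ‖v x‖ ^ (4:ℝ) := by
    funext x
    rw [show (4:ℝ) = 1 + 3 by norm_num, Real.rpow_add' (norm_nonneg _) (by norm_num),
      Real.rpow_one]
  rw [hfun] at hH
  have h4 : eLpNorm (fun x => ‖v x‖ ^ (4:ℝ)) 1 μ = eLpNorm v 4 μ ^ (4:ℝ) := by
    rw [eLpNorm_norm_rpow v (by norm_num : (0:ℝ) < 4)]
    norm_num
  have h3 : eLpNorm (fun x => ‖v x‖ ^ (3:ℝ)) 2 μ = eLpNorm v 6 μ ^ (3:ℝ) := by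
    rw [eLpNorm_norm_rpow v (by norm_num : (0:ℝ) < 3)]
    norm_num
  rw [h4, h3, eLpNorm_norm, ENNReal.coe_one, one_mul] at hH
  exact hH

/-- Lower bound `E_min(ρ) ≥ −(3/16)ρ` for the constrained minimal energy. -/
theorem stmt_15 (d : ℕ) (ρ : ℝ) (hρ : 0 < ρ) :
    -(3/16) * ρ ≤ sInf {e : ℝ | ∃ v : (Fin d → ℝ) → ℂ,
      MemLp v 2 (volume : Measure (Fin d → ℝ)) ∧
      MemLp v 4 (volume : Measure (Fin d → ℝ)) ∧
      MemLp v 6 (volume : Measure (Fin d → ℝ)) ∧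
      MemLp (fun x => fderiv ℝ v x) 2 (volume : Measure (Fin d → ℝ)) ∧
      (eLpNorm v 2 volume).toReal ^ 2 = ρ ∧ cqEnergy d v = e} := by
  set S := {e : ℝ | ∃ v : (Fin d → ℝ) → ℂ,
      MemLp v 2 (volume : Measure (Fin d → ℝ)) ∧
      MemLp v 4 (volume : Measure (Fin d → ℝ)) ∧
      MemLp v 6 (volume : Measure (Fin d → ℝ)) ∧
      MemLp (fun x => fderiv ℝ v x) 2 (volume : Measure (Fin d → ℝ)) ∧
      (eLpNorm v 2 volume).toReal ^ 2 = ρ ∧ cqEnergy d v = e}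
  rcases Set.eq_empty_or_nonempty S with hS | hS
  · rw [hS, Real.sInf_empty]; nlinarith
  refine le_csInf hS ?_
  rintro e ⟨v, hv2, hv4, hv6, hgrad, hmass, rfl⟩
  -- notation
  set a := (eLpNorm v 2 volume).toReal with ha
  set b := (eLpNorm v 4 volume).toReal with hb
  set c := (eLpNorm v 6 volume).toReal with hc
  have ha0 : 0 ≤ a := ENNReal.toReal_nonneg
  have hb0 : 0 ≤ b := ENNReal.toReal_nonneg
  have hc0 : 0 ≤ c := ENNReal.toReal_nonneg
  have hkey := interp_446 v hv2.aestronglyMeasurable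
  have h2fin : eLpNorm v 2 volume ≠ ⊤ := hv2.eLpNorm_ne_top
  have h6fin : eLpNorm v 6 volume ≠ ⊤ := hv6.eLpNorm_ne_top
  have hRfin : eLpNorm v 2 volume * eLpNorm v 6 volume ^ (3:ℝ) ≠ ⊤ :=
    ENNReal.mul_ne_top h2fin (by
      exact ENNReal.rpow_ne_top_of_nonneg (by norm_num) h6fin)
  have hreal : b ^ 4 ≤ a * c ^ 3 := by
    have := ENNReal.toReal_mono hRfin hkey
    rw [ENNReal.toReal_mul, ← ENNReal.toReal_rpow, ← ENNReal.toReal_rpow] at this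
    calc b ^ 4 = b ^ (4:ℝ) := by rw [← Real.rpow_natCast b 4]; norm_num
    _ ≤ a * c ^ (3:ℝ) := this
    _ = a * c ^ 3 := by rw [← Real.rpow_natCast c 3]; norm_num
  have hA : 0 ≤ (eLpNorm (fun x => fderiv ℝ v x) 2 volume).toReal ^ 2 := sq_nonneg _
  show -(3/16) * ρ ≤ cqEnergy d v
  rw [cqEnergy]
  rw [show (eLpNorm v 4 volume).toReal = b from rfl,
      show (eLpNorm v 6 volume).toReal = c from rfl]
  nlinarith [sq_nonneg (c ^ 3 - (3/4) * a), sq_nonneg a, hmass]
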